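/- If P is a Jónsson poset of cardinality κ, then every subset A of P of cardinality strictly less than cf(κ) has an upper bound in P. -/

import Mathlib

open Cardinal

/-- A relation `r` on `α` is Jónsson if `α` is infinite and every proper
initial segment (downward-closed set w.r.t. `r`) has cardinality `< #α`. -/
def JonssonRel {α : Type*} (r : α → α → Prop) : Prop :=
  Infinite α ∧ ∀ A : Set α, (∀ x ∈ A, ∀ y, r y x → y ∈ A) →
    A ≠ Set.univ → #A < #α

theorem stmt8 {α : Type*} [PartialOrder α]
    (h : JonssonRel (fun x y : α => x ≤ y))
    (A : Set α) (hA : #A < (#α).ord.cof) :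
    ∃ z : α, ∀ a ∈ A, a ≤ z := by
  obtain ⟨hinf, hseg⟩ := h
  by_contra hub
  push_neg at hub
  -- for each a ∈ A, S a = {x | ¬ a ≤ x} is downward closed, proper
  set S : A → Set α := fun a => {x | ¬ (a : α) ≤ x} with hS
  have hsmall : ∀ a : A, #(S a) < #α := by
    intro a
    refine hseg _ ?_ ?_
    · intro x hx y hyx hay
      exact hx (hay.trans hyx)
    · intro hEq
      have : (a : α) ∈ S a := hEq ▸ Set.mem_univ _
      exact this le_rfl
  have hcov : (Set.univ : Set α) ⊆ ⋃ a : A, S a := by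
    intro x _
    obtain ⟨a, ha, hax⟩ := hub x
    exact Set.mem_iUnion.2 ⟨⟨a, ha⟩, hax⟩
  have hAcard : #A < #α := hA.trans_le (Ordinal.cof_ord_le _)
  have hsup : (⨆ a : A, #(S a)) < #α := Ordinal.iSup_lt hA hsmall
  have hsum : Cardinal.sum (fun a : A => #(S a)) < #α := by
    refine lt_of_le_of_lt (Cardinal.sum_le_mk_mul_iSup _) ?_
    exact Cardinal.mul_lt_of_lt (Cardinal.aleph0_le_mk α) hAcard hsup
  have : #α ≤ Cardinal.sum (fun a : A => #(S a)) := by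
    calc #α = #(Set.univ : Set α) := Cardinal.mk_univ.symm
    _ ≤ #(⋃ a : A, S a) := Cardinal.mk_le_mk_of_subset hcov
    _ ≤ Cardinal.sum (fun a : A => #(S a)) := Cardinal.mk_iUnion_le_sum_mk
  exact absurd this (not_le.2 hsum)
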